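/- Define K₁ : (0,∞) → ℝ by K₁(y) := ∫_0^∞ e^{−y·cosh u}·cosh u du. Then K₁(y)·sqrt(2y/π)·e^{y} → 1 as y → ∞; that is, K₁(y) ∼ sqrt(π/(2y))·e^{−y} as y → ∞. -/

import Mathlib

open Filter Topology Real MeasureTheory

/-- The modified Bessel function of the third kind of order 1,
`K₁(y) = ∫_0^∞ e^{-y cosh u} cosh u du`. -/
noncomputable def besselK1 (y : ℝ) : ℝ :=
  ∫ u in Set.Ioi (0 : ℝ), Real.exp (-y * Real.cosh u) * Real.cosh u

lemma sinh_image_Ioi : Real.sinh '' Set.Ioi 0 = Set.Ioi 0 := by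
  ext x
  simp only [Set.mem_image, Set.mem_Ioi]
  constructor
  · rintro ⟨u, hu, rfl⟩; exact Real.sinh_pos_iff.2 hu
  · intro hx; exact ⟨Real.arsinh x, Real.arsinh_pos_iff.2 hx, Real.sinh_arsinh x⟩

lemma besselK1_eq_integral (y : ℝ) :
    (∫ u in Set.Ioi (0:ℝ), Real.exp (-y * Real.cosh u) * Real.cosh u)
      = ∫ s in Set.Ioi (0:ℝ), Real.exp (-(y * Real.sqrt (1 + s ^ 2))) := by
  conv_rhs => rw [← sinh_image_Ioi, integral_image_eq_integral_abs_deriv_smul measurableSet_Ioi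
    (fun x _ => (Real.hasDerivAt_sinh x).hasDerivWithinAt) Real.sinh_injective.injOn]
  have h : ∀ u : ℝ, |Real.cosh u| • Real.exp (-(y * Real.sqrt (1 + Real.sinh u ^ 2)))
      = Real.exp (-y * Real.cosh u) * Real.cosh u := by
    intro u
    have h1 : Real.sqrt (1 + Real.sinh u ^ 2) = Real.cosh u := by
      rw [add_comm, ← Real.cosh_sq, Real.sqrt_sq (Real.cosh_pos u).le]
    rw [smul_eq_mul, h1, abs_of_pos (Real.cosh_pos u), neg_mul, mul_comm]
  simp only [h]

lemma besselK1_key_identity {y : ℝ} (hy : 0 < y) (t : ℝ) :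
    y * (Real.sqrt (1 + 2 * t ^ 2 / y) - 1)
      = 2 * t ^ 2 / (1 + Real.sqrt (1 + 2 * t ^ 2 / y)) := by
  set s := Real.sqrt (1 + 2 * t ^ 2 / y) with hs_def
  have h0 : (0:ℝ) ≤ 1 + 2 * t ^ 2 / y := by positivity
  have hs : s ^ 2 = 1 + 2 * t ^ 2 / y := Real.sq_sqrt h0
  have hsn : 0 ≤ s := Real.sqrt_nonneg _
  have h1 : y * s ^ 2 = y + 2 * t ^ 2 := by rw [hs]; field_simp
  rw [eq_div_iff (by positivity : (1:ℝ) + s ≠ 0)]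
  nlinarith [h1]

lemma besselK1_scaled {y : ℝ} (hy : 0 < y) :
    (∫ s in Set.Ioi (0:ℝ), Real.exp (-(y * Real.sqrt (1 + s ^ 2))))
        * Real.sqrt (2 * y / π) * Real.exp y
      = (2 / Real.sqrt π) *
        ∫ t in Set.Ioi (0:ℝ), Real.exp (-(y * (Real.sqrt (1 + 2 * t ^ 2 / y) - 1))) := by
  have hb : 0 < Real.sqrt (2 / y) := Real.sqrt_pos.2 (by positivity)
  have h2 := integral_comp_mul_left_Ioi
    (fun s => Real.exp (-(y * Real.sqrt (1 + s ^ 2)))) 0 hb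
  simp only [mul_zero, smul_eq_mul] at h2
  have h3 : (∫ s in Set.Ioi (0:ℝ), Real.exp (-(y * Real.sqrt (1 + s ^ 2))))
      = Real.sqrt (2 / y) *
        ∫ t in Set.Ioi (0:ℝ), Real.exp (-(y * Real.sqrt (1 + (Real.sqrt (2 / y) * t) ^ 2))) := by
    rw [h2]; field_simp
  have h4 : ∀ t : ℝ, Real.exp (-(y * Real.sqrt (1 + (Real.sqrt (2 / y) * t) ^ 2)))
      = Real.exp (-y) * Real.exp (-(y * (Real.sqrt (1 + 2 * t ^ 2 / y) - 1))) := by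
    intro t
    have harg : 1 + (Real.sqrt (2 / y) * t) ^ 2 = 1 + 2 * t ^ 2 / y := by
      rw [mul_pow, Real.sq_sqrt (by positivity : (0:ℝ) ≤ 2 / y)]; ring
    rw [harg, ← Real.exp_add]
    congr 1
    ring
  simp only [h4] at h3
  rw [integral_const_mul] at h3
  set I := ∫ t in Set.Ioi (0:ℝ), Real.exp (-(y * (Real.sqrt (1 + 2 * t ^ 2 / y) - 1))) with hI
  have hc : Real.sqrt (2 / y) * Real.sqrt (2 * y / π) = 2 / Real.sqrt π := by
    rw [← Real.sqrt_mul (by positivity : (0:ℝ) ≤ 2 / y),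
      show 2 / y * (2 * y / π) = 4 / π by field_simp; ring,
      Real.sqrt_div (by norm_num : (0:ℝ) ≤ 4),
      show Real.sqrt 4 = 2 by
        rw [show (4:ℝ) = 2 ^ 2 by norm_num, Real.sqrt_sq (by norm_num : (0:ℝ) ≤ 2)]]
  have he : Real.exp (-y) * Real.exp y = 1 := by rw [← Real.exp_add]; simp
  rw [h3]
  linear_combination (I * (Real.exp (-y) * Real.exp y)) * hc
    + ((2 / Real.sqrt π) * I) * he

lemma besselK1_tendsto_inner_integral :
    Tendsto (fun y : ℝ => ∫ t in Set.Ioi (0:ℝ),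
        Real.exp (-(y * (Real.sqrt (1 + 2 * t ^ 2 / y) - 1))))
      atTop (𝓝 (Real.sqrt π / 2)) := by
  have hlim_int : (∫ t in Set.Ioi (0:ℝ), Real.exp (-t ^ 2)) = Real.sqrt π / 2 := by
    simpa using integral_gaussian_Ioi 1
  rw [← hlim_int]
  apply tendsto_integral_filter_of_dominated_convergence
    (fun t => Real.exp 1 * Real.exp (-1 * t))
  · refine Filter.Eventually.of_forall fun y => ?_
    refine Continuous.aestronglyMeasurable ?_
    fun_prop
  · filter_upwards [eventually_ge_atTop (1:ℝ)] with y hy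
    rw [ae_restrict_iff' measurableSet_Ioi]
    refine Filter.Eventually.of_forall fun t ht => ?_
    have ht0 : 0 < t := ht
    have hy0 : (0:ℝ) < y := lt_of_lt_of_le one_pos hy
    set s := Real.sqrt (1 + 2 * t ^ 2 / y) with hs_def
    have h0 : (0:ℝ) ≤ 1 + 2 * t ^ 2 / y := by positivity
    have hs : s ^ 2 = 1 + 2 * t ^ 2 / y := Real.sq_sqrt h0
    have hsn : 0 ≤ s := Real.sqrt_nonneg _
    have hs1 : 1 ≤ s := by
      nlinarith [div_nonneg (by positivity : (0:ℝ) ≤ 2 * t ^ 2) hy0.le]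
    have hsle : s ≤ 1 + 2 * t := by
      have h1 : s ≤ Real.sqrt (1 + 2 * t ^ 2) := by
        apply Real.sqrt_le_sqrt
        have := div_le_self (by positivity : (0:ℝ) ≤ 2 * t ^ 2) hy
        linarith
      have h2 : Real.sqrt (1 + 2 * t ^ 2) ≤ 1 + 2 * t := by
        rw [show (1:ℝ) + 2 * t = Real.sqrt ((1 + 2 * t) ^ 2) by
          rw [Real.sqrt_sq (by positivity : (0:ℝ) ≤ 1 + 2 * t)]]
        apply Real.sqrt_le_sqrt
        nlinarith
      linarith
    rw [Real.norm_eq_abs, Real.abs_exp, ← Real.exp_add]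
    apply Real.exp_le_exp.2
    rw [besselK1_key_identity hy0 t, ← hs_def]
    have hdiv : t - 1 ≤ 2 * t ^ 2 / (1 + s) := by
      rw [le_div_iff₀ (by positivity : (0:ℝ) < 1 + s)]
      nlinarith
    linarith
  · exact (exp_neg_integrableOn_Ioi 0 one_pos).const_mul _
  · refine Filter.Eventually.of_forall fun t => ?_
    have h1 : Tendsto (fun y : ℝ => 2 * t ^ 2 / y) atTop (𝓝 0) :=
      Tendsto.div_atTop tendsto_const_nhds tendsto_id
    have hden : ContinuousAt
        (fun a : ℝ => Real.exp (-(2 * t ^ 2 / (1 + Real.sqrt (1 + a))))) 0 := by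
      apply Real.continuous_exp.continuousAt.comp
      apply ContinuousAt.neg
      apply ContinuousAt.div
      · exact continuousAt_const
      · exact (continuous_const.add (Real.continuous_sqrt.comp
          (continuous_const.add continuous_id))).continuousAt
      · norm_num
    have h2 : Tendsto (fun a : ℝ => Real.exp (-(2 * t ^ 2 / (1 + Real.sqrt (1 + a)))))
        (𝓝 0) (𝓝 (Real.exp (-t ^ 2))) := by
      have := hden.tendsto
      convert this using 2
      norm_num
    refine (h2.comp h1).congr' ?_
    filter_upwards [eventually_gt_atTop (0:ℝ)] with y hy0
    show Real.exp (-(2 * t ^ 2 / (1 + Real.sqrt (1 + 2 * t ^ 2 / y))))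
      = Real.exp (-(y * (Real.sqrt (1 + 2 * t ^ 2 / y) - 1)))
    rw [besselK1_key_identity hy0 t]

/-- Asymptotics of the modified Bessel function of the third kind of order 1:
`K₁(y)·√(2y/π)·e^y → 1` as `y → ∞`, i.e. `K₁(y) ∼ √(π/(2y)) e^{-y}`. -/
theorem besselK1_asymptotic :
    Tendsto (fun y : ℝ => besselK1 y * Real.sqrt (2 * y / π) * Real.exp y)
      atTop (𝓝 1) := by
  have hπ : 0 < Real.sqrt π := Real.sqrt_pos.2 Real.pi_pos
  have hmul := besselK1_tendsto_inner_integral.const_mul (2 / Real.sqrt π)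
  have hone : (2 / Real.sqrt π) * (Real.sqrt π / 2) = 1 := by field_simp
  rw [hone] at hmul
  refine hmul.congr' ?_
  filter_upwards [eventually_gt_atTop (0:ℝ)] with y hy
  rw [besselK1, besselK1_eq_integral y, besselK1_scaled hy]
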